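/- Let p be a prime, n ≥ 2, and a_1, …, a_n ∈ ℚ_p with |a_1|_p > 1 and |a_j|_p ≤ |a_1|_p for all 2 ≤ j ≤ n. Define α_0 = a_1 and α_{k+1} = a_1 + a_2/α_k + ⋯ + a_n/α_k^{n−1}. Then for every k ≥ 1 one has |α_{k+1} − α_k|_p ≤ C · |α_k − α_{k−1}|_p, where C = max_{2 ≤ j ≤ n} |a_j|_p / |a_1|_p^j, and moreover C < 1. -/

import Mathlib

private lemma padic_norm_sum_le' {p : ℕ} [Fact p.Prime] {ι : Type*} (s : Finset ι)
    (f : ι → ℚ_[p]) {B : ℝ} (hB : 0 ≤ B) (h : ∀ i ∈ s, ‖f i‖ ≤ B) :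
    ‖∑ i ∈ s, f i‖ ≤ B := by
  induction s using Finset.cons_induction with
  | empty => simpa using hB
  | cons a s ha ih =>
    rw [Finset.sum_cons]
    refine le_trans (Padic.nonarchimedean _ _) (max_le (h a (by simp)) (ih ?_))
    exact fun i hi => h i (by simp [hi])

/-- With `α_0 = a_1`, `α_{k+1} = a_1 + a_2/α_k + ⋯ + a_n/α_k^(n−1)` as before
(`|a_1|_p > 1`, `|a_j|_p ≤ |a_1|_p` for `2 ≤ j ≤ n`, `n ≥ 2`), for every `k ≥ 1` one has
`|α_{k+1} − α_k|_p ≤ C · |α_k − α_{k−1}|_p` where `C = max_{2 ≤ j ≤ n} |a_j|_p / |a_1|_p^j`,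
and moreover `C < 1`. -/
theorem padic_recurrence_contraction (p : ℕ) [Fact p.Prime] (n : ℕ) (hn : 2 ≤ n)
    (a : ℕ → ℚ_[p]) (ha1 : 1 < ‖a 1‖)
    (haj : ∀ j, 2 ≤ j → j ≤ n → ‖a j‖ ≤ ‖a 1‖)
    (α : ℕ → ℚ_[p]) (h0 : α 0 = a 1)
    (hrec : ∀ k, α (k + 1) = ∑ j ∈ Finset.Icc 1 n, a j / α k ^ (j - 1))
    (C : ℝ)
    (hC : C = (Finset.Icc 2 n).sup' (Finset.nonempty_Icc.2 hn)
      (fun j => ‖a j‖ / ‖a 1‖ ^ j)) :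
    C < 1 ∧ ∀ k, 1 ≤ k → ‖α (k + 1) - α k‖ ≤ C * ‖α k - α (k - 1)‖ := by
  have ha1pos : (0:ℝ) < ‖a 1‖ := lt_trans one_pos ha1
  set A := ‖a 1‖ with hA
  -- norm invariance: ‖α k‖ = A for all k
  have hsplit : Finset.Icc 1 n = insert 1 (Finset.Icc 2 n) := by
    ext x; simp only [Finset.mem_Icc, Finset.mem_insert]; omega
  have hnormα : ∀ k, ‖α k‖ = A := by
    intro k
    induction k with
    | zero => rw [h0]
    | succ k ih =>
      have hαk0 : α k ≠ 0 := by
        intro h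
        rw [h, norm_zero] at ih
        exact absurd ih.symm (ne_of_gt ha1pos)
      rw [hrec k, hsplit, Finset.sum_insert (by simp)]
      have h1 : a 1 / α k ^ (1 - 1) = a 1 := by norm_num
      rw [h1]
      have hrest : ‖∑ j ∈ Finset.Icc 2 n, a j / α k ^ (j - 1)‖ ≤ 1 := by
        apply padic_norm_sum_le' _ _ zero_le_one
        intro j hj
        obtain ⟨hj2, hjn⟩ := Finset.mem_Icc.mp hj
        rw [norm_div, norm_pow, ih]
        rw [div_le_one (pow_pos ha1pos _)]
        calc ‖a j‖ ≤ A := haj j hj2 hjn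
          _ = A ^ 1 := (pow_one A).symm
          _ ≤ A ^ (j - 1) := pow_le_pow_right₀ (le_of_lt ha1) (by omega)
      have hne : ‖a 1‖ ≠ ‖∑ j ∈ Finset.Icc 2 n, a j / α k ^ (j - 1)‖ :=
        ne_of_gt (lt_of_le_of_lt hrest ha1)
      rw [Padic.add_eq_max_of_ne hne]
      exact max_eq_left (le_of_lt (lt_of_le_of_lt hrest ha1))
  have hα0 : ∀ k, α k ≠ 0 := by
    intro k h
    have := hnormα k
    rw [h, norm_zero] at this
    exact absurd this.symm (ne_of_gt ha1pos)
  -- 0 ≤ C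
  have h2mem : 2 ∈ Finset.Icc 2 n := Finset.mem_Icc.mpr ⟨le_refl 2, hn⟩
  have hC0 : 0 ≤ C := by
    rw [hC]
    exact le_trans (div_nonneg (norm_nonneg _) (le_of_lt (pow_pos ha1pos 2)))
      (Finset.le_sup' (fun j => ‖a j‖ / A ^ j) h2mem)
  -- C < 1
  have hClt : C < 1 := by
    rw [hC, Finset.sup'_lt_iff]
    intro j hj
    obtain ⟨hj2, hjn⟩ := Finset.mem_Icc.mp hj
    rw [div_lt_one (pow_pos ha1pos _)]
    calc ‖a j‖ ≤ A := haj j hj2 hjn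
      _ = A ^ 1 := (pow_one A).symm
      _ < A ^ j := pow_lt_pow_right₀ ha1 (by omega)
  refine ⟨hClt, ?_⟩
  intro k hk
  obtain ⟨m, rfl⟩ : ∃ m, k = m + 1 := ⟨k - 1, by omega⟩
  simp only [Nat.add_sub_cancel]
  have key : α (m + 1 + 1) - α (m + 1)
      = ∑ j ∈ Finset.Icc 1 n, (a j / α (m + 1) ^ (j - 1) - a j / α m ^ (j - 1)) := by
    rw [Finset.sum_sub_distrib, ← hrec (m + 1), ← hrec m]
  rw [key]
  set x := α (m + 1) with hx
  set y := α m with hy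
  set D := ‖x - y‖ with hD
  apply padic_norm_sum_le' _ _ (mul_nonneg hC0 (norm_nonneg _))
  intro j hj
  obtain ⟨hj1, hjn⟩ := Finset.mem_Icc.mp hj
  by_cases hj1' : j = 1
  · subst hj1'
    simp only [Nat.sub_self, pow_zero, div_one, sub_self, norm_zero]
    exact mul_nonneg hC0 (norm_nonneg _)
  · have hj2 : 2 ≤ j := by omega
    set m' := j - 1 with hm'
    have hm1 : 1 ≤ m' := by omega
    have hjm : j = m' + 1 := by omega
    have hxn : x ≠ 0 := hα0 _
    have hyn : y ≠ 0 := hα0 _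
    have hnx : ‖x‖ = A := hnormα _
    have hny : ‖y‖ = A := hnormα _
    rw [div_sub_div _ _ (pow_ne_zero _ hxn) (pow_ne_zero _ hyn)]
    have hnum : a j * y ^ m' - x ^ m' * a j = a j * (y ^ m' - x ^ m') := by ring
    rw [hnum, norm_div, norm_mul, norm_mul, norm_pow, norm_pow, hnx, hny]
    -- bound ‖y ^ m' - x ^ m'‖
    have hgeom : ‖y ^ m' - x ^ m'‖ ≤ A ^ (m' - 1) * D := by
      have h1 : (∑ i ∈ Finset.range m', y ^ i * x ^ (m' - 1 - i)) * (y - x)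
          = y ^ m' - x ^ m' := geom_sum₂_mul y x m'
      rw [← h1, norm_mul]
      have hyx : ‖y - x‖ = D := by rw [hD, norm_sub_rev]
      rw [hyx]
      apply mul_le_mul_of_nonneg_right _ (norm_nonneg _)
      apply padic_norm_sum_le' _ _ (le_of_lt (pow_pos ha1pos _))
      intro i hi
      have hi' : i < m' := Finset.mem_range.mp hi
      rw [norm_mul, norm_pow, norm_pow, hnx, hny, ← pow_add]
      apply le_of_eq
      congr 1
      omega
    have hden : (0:ℝ) < A ^ m' * A ^ m' := mul_pos (pow_pos ha1pos _) (pow_pos ha1pos _)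
    calc ‖a j‖ * ‖y ^ m' - x ^ m'‖ / (A ^ m' * A ^ m')
        ≤ ‖a j‖ * (A ^ (m' - 1) * D) / (A ^ m' * A ^ m') := by
          gcongr
      _ = (‖a j‖ / A ^ j) * D := by
          have hexp : A ^ (m' - 1) * A ^ j = A ^ m' * A ^ m' := by
            rw [← pow_add, ← pow_add]; congr 1; omega
          rw [← hexp]
          field_simp
      _ ≤ C * D := by
          apply mul_le_mul_of_nonneg_right _ (norm_nonneg _)
          rw [hC]
          exact Finset.le_sup' (fun j => ‖a j‖ / A ^ j) (Finset.mem_Icc.mpr ⟨hj2, hjn⟩)
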